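/- Let k be an algebraically closed field and let R be a finitely generated commutative Hopf k-algebra that is a domain. Then R⊗_k R is a domain. -/

import Mathlib

open scoped TensorProduct

/-- For a maximal ideal `m` of a finitely generated algebra over an algebraically closed
field `k`, there is a `k`-algebra homomorphism to `k` with kernel `m`. -/
lemma stmt17_aux_algHom {k R : Type*} [Field k] [IsAlgClosed k] [CommRing R] [Algebra k R]
    (hfg : Algebra.FiniteType k R) (m : Ideal R) [m.IsMaximal] :
    ∃ φ : R →ₐ[k] k, ∀ x, φ x = 0 ↔ x ∈ m := by
  letI : Field (R ⧸ m) := Ideal.Quotient.field m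
  have hK : Algebra.FiniteType k (R ⧸ m) :=
    hfg.of_surjective (Ideal.Quotient.mkₐ k m) Ideal.Quotient.mk_surjective
  have hfin : Module.Finite k (R ⧸ m) := finite_of_finite_type_of_isJacobsonRing k (R ⧸ m)
  have hint : Algebra.IsIntegral k (R ⧸ m) := Algebra.IsIntegral.of_finite k (R ⧸ m)
  have hsurj : Function.Surjective (algebraMap k (R ⧸ m)) :=
    IsAlgClosed.algebraMap_bijective_of_isIntegral.2
  have hinj : Function.Injective (algebraMap k (R ⧸ m)) := (algebraMap k (R ⧸ m)).injective
  let e : k ≃ₐ[k] (R ⧸ m) := AlgEquiv.ofBijective (Algebra.ofId k (R ⧸ m)) ⟨hinj, hsurj⟩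
  refine ⟨e.symm.toAlgHom.comp (Ideal.Quotient.mkₐ k m), fun x => ?_⟩
  have : e.symm (Ideal.Quotient.mk m x) = 0 ↔ Ideal.Quotient.mk m x = 0 := by
    rw [map_eq_zero_iff _ e.symm.injective]
  simpa [this] using Ideal.Quotient.eq_zero_iff_mem

/-- Let `k` be an algebraically closed field and let `R` be a finitely generated commutative
Hopf `k`-algebra that is a domain.  Then `R ⊗ₖ R` is a domain. -/
theorem stmt17 {k R : Type*} [Field k] [IsAlgClosed k]
    [CommRing R] [HopfAlgebra k R] [IsDomain R]
    (hfg : Algebra.FiniteType k R) :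
    IsDomain (R ⊗[k] R) := by
  -- a basis of R over k, and the induced R-basis of R ⊗ R
  let b : Module.Basis _ k R := Module.Basis.ofVectorSpace k R
  let B : Module.Basis _ R (R ⊗[k] R) := b.baseChange R
  have hne : Nonempty (Module.Basis.ofVectorSpaceIndex k R) := b.index_nonempty
  have hnt : Nontrivial (R ⊗[k] R) := B.repr.toEquiv.nontrivial
  -- evaluation at a point: for each k-point φ of R, the map R ⊗ R → R
  let Φ : (R →ₐ[k] k) → (R ⊗[k] R →ₐ[k] R) := fun φ =>
    (Algebra.TensorProduct.lid k R).toAlgHom.comp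
      (Algebra.TensorProduct.map φ (AlgHom.id k R))
  -- every element of R ⊗ R is a sum of c i ⊗ b i
  have hrepr : ∀ f : R ⊗[k] R, f = ∑ i ∈ (B.repr f).support, (B.repr f i) ⊗ₜ[k] b i := by
    intro f
    have h1 := B.linearCombination_repr f
    rw [Finsupp.linearCombination_apply, Finsupp.sum] at h1
    conv_lhs => rw [← h1]
    refine Finset.sum_congr rfl fun i _ => ?_
    rw [Module.Basis.baseChange_apply, TensorProduct.smul_tmul']
    simp
  -- value of Φ φ on such an element
  have hΦ : ∀ (φ : R →ₐ[k] k) (f : R ⊗[k] R),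
      Φ φ f = ∑ i ∈ (B.repr f).support, φ (B.repr f i) • b i := by
    intro φ f
    conv_lhs => rw [hrepr f]
    rw [map_sum]
    refine Finset.sum_congr rfl fun i _ => ?_
    simp [Φ, Algebra.TensorProduct.lid_tmul, Algebra.smul_def]
  -- Φ φ f = 0 iff all coefficients are killed by φ
  have hΦzero : ∀ (φ : R →ₐ[k] k) (f : R ⊗[k] R),
      Φ φ f = 0 → ∀ i ∈ (B.repr f).support, φ (B.repr f i) = 0 := by
    intro φ f h0
    rw [hΦ] at h0
    exact linearIndependent_iff'.mp b.linearIndependent _ _ h0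
  have hJac : IsJacobsonRing R := isJacobsonRing_of_finiteType (A := k)
  have hnzd : NoZeroDivisors (R ⊗[k] R) := by
    constructor
    intro f g hfg0
    by_contra hcon
    push_neg at hcon
    obtain ⟨hf, hg⟩ := hcon
    -- ideals generated by the coefficients
    let I : Ideal R := Ideal.span (Set.range (B.repr f))
    let J : Ideal R := Ideal.span (Set.range (B.repr g))
    -- every maximal ideal contains I or J
    have key : ∀ m : Ideal R, m.IsMaximal → I ≤ m ∨ J ≤ m := by
      intro m hm
      obtain ⟨φ, hφ⟩ := stmt17_aux_algHom hfg m
      have : Φ φ f * Φ φ g = 0 := by rw [← map_mul, hfg0, map_zero]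
      rcases mul_eq_zero.mp this with h | h
      · left
        rw [Ideal.span_le]
        rintro _ ⟨i, rfl⟩
        by_cases hi : i ∈ (B.repr f).support
        · exact (hφ _).mp (hΦzero φ f h i hi)
        · rw [Finsupp.notMem_support_iff] at hi
          rw [hi]; exact m.zero_mem
      · right
        rw [Ideal.span_le]
        rintro _ ⟨i, rfl⟩
        by_cases hi : i ∈ (B.repr g).support
        · exact (hφ _).mp (hΦzero φ g h i hi)
        · rw [Finsupp.notMem_support_iff] at hi
          rw [hi]; exact m.zero_mem
    -- hence I * J is contained in the Jacobson radical of ⊥, which is ⊥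
    have hIJ : I * J = ⊥ := by
      have h1 : I * J ≤ (⊥ : Ideal R).jacobson := by
        rw [Ideal.jacobson]
        refine le_sInf ?_
        rintro m ⟨-, hm⟩
        rcases key m hm with h | h
        · exact le_trans Ideal.mul_le_left h
        · exact le_trans Ideal.mul_le_right h
      rwa [hJac.out Ideal.isRadical_bot_of_noZeroDivisors, le_bot_iff] at h1
    rcases Ideal.mul_eq_bot.mp hIJ with h | h
    · apply hf
      have : B.repr f = 0 := by
        ext i
        have : B.repr f i ∈ I := Ideal.subset_span ⟨i, rfl⟩
        rw [h] at this
        simpa using this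
      exact (map_eq_zero_iff B.repr B.repr.injective).mp this
    · apply hg
      have : B.repr g = 0 := by
        ext i
        have : B.repr g i ∈ J := Ideal.subset_span ⟨i, rfl⟩
        rw [h] at this
        simpa using this
      exact (map_eq_zero_iff B.repr B.repr.injective).mp this
  exact NoZeroDivisors.to_isDomain _
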